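/- arXiv:2502.11421 — 4 statements merged into one kernel-verified Lean document; each statement's English description precedes it below -/
import Mathlib

section
/- If a finite graph G is connected, asymmetric (its only automorphism is the identity), d-regular, non-bipartite, and triangle-free, then its complement is rigid (its only endomorphism is the identity) and is (n-d-1)-regular, where n is the number of vertices of G. -/
lemma exists_idempotent_iterate' {α : Type} [Finite α] (f : α → α) :
    ∃ m, 0 < m ∧ f^[m] ∘ f^[m] = f^[m] := by
  obtain ⟨a, b, hne, heq⟩ :=
    Finite.exists_ne_map_eq_of_infinite (fun n : ℕ => f^[n])
  wlog hab : a < b generalizing a b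
  · exact this b a hne.symm heq.symm (hne.lt_or_gt.resolve_left hab)
  set k := b - a with hk
  have hkpos : 0 < k := Nat.sub_pos_of_lt hab
  have base : f^[a + k] = f^[a] := by
    rw [hk, Nat.add_sub_cancel' hab.le]; exact heq.symm
  have step : ∀ c, f^[a + c + k] = f^[a + c] := by
    intro c
    have h1 : a + c + k = c + (a + k) := by ring
    have h2 : c + a = a + c := by ring
    rw [h1, Function.iterate_add, base, ← Function.iterate_add, h2]
  have step2 : ∀ t c, f^[a + c + t * k] = f^[a + c] := by
    intro t
    induction t with
    | zero => simp
    | succ t ih =>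
      intro c
      have h1 : a + c + (t + 1) * k = a + (c + t * k) + k := by ring
      have h2 : a + (c + t * k) = a + c + t * k := by ring
      rw [h1, step, h2, ih]
  refine ⟨(a + 1) * k, by positivity, ?_⟩
  have hm : a ≤ (a + 1) * k := by nlinarith
  have hc : (a + 1) * k = a + ((a + 1) * k - a) := by omega
  rw [← Function.iterate_add]
  calc f^[(a + 1) * k + (a + 1) * k]
      = f^[a + ((a + 1) * k - a) + (a + 1) * k] := by rw [← hc]
    _ = f^[a + ((a + 1) * k - a)] := step2 (a + 1) _
    _ = f^[(a + 1) * k] := by rw [← hc]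

/-- If a finite graph `G` is connected, asymmetric, `d`-regular, non-bipartite and
triangle-free, then its complement is rigid and `(n - d - 1)`-regular. -/
theorem complement_rigid {V : Type} [Fintype V] (G : SimpleGraph V) (d : ℕ)
    (hconn : G.Connected)
    (hasym : ∀ e : G ≃g G, ∀ v, e v = v)
    (hreg : ∀ v, (G.neighborSet v).ncard = d)
    (hnonbip : ¬ G.Colorable 2)
    (htrifree : G.CliqueFree 3) :
    (∀ f : Gᶜ →g Gᶜ, ∀ v, f v = v) ∧
    (∀ v, (Gᶜ.neighborSet v).ncard = Fintype.card V - d - 1) := by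
  classical
  have hd : ∀ v : V, (G.neighborFinset v).card = d := by
    intro v
    have h := hreg v
    rwa [Set.ncard_eq_toFinset_card'] at h
  constructor
  · intro f v₀
    obtain ⟨m, hm, hidem⟩ := exists_idempotent_iterate' (⇑f)
    set g : V → V := (⇑f)^[m] with hgdef
    have hiter : ∀ (t : ℕ) (u v : V), Gᶜ.Adj u v → Gᶜ.Adj ((⇑f)^[t] u) ((⇑f)^[t] v) := by
      intro t
      induction t with
      | zero => exact fun u v h => by simpa using h
      | succ t ih =>
        intro u v h
        rw [Function.iterate_succ', Function.comp_apply, Function.comp_apply]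
        exact f.map_adj (ih u v h)
    have hg : ∀ u v, Gᶜ.Adj u v → Gᶜ.Adj (g u) (g v) := hiter m
    have hgg : ∀ x, g (g x) = g x := fun x => congrFun hidem x
    have h1 : ∀ v, g v ≠ v → G.Adj v (g v) := by
      intro v hv
      by_contra hna
      have hadj : Gᶜ.Adj v (g v) := (G.compl_adj v (g v)).mpr ⟨hv.symm, hna⟩
      have h2 := hg _ _ hadj
      rw [hgg] at h2
      exact Gᶜ.irrefl h2
    have h2 : ∀ u v, u ≠ v → ¬ G.Adj u v → g u ≠ g v ∧ ¬ G.Adj (g u) (g v) := by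
      intro u v h h'
      exact (G.compl_adj _ _).mp (hg u v ((G.compl_adj u v).mpr ⟨h, h'⟩))
    have h3 : ∀ v, g v ≠ v → ∀ x, g x = x → ¬ G.Adj x (g v) := by
      intro v hv x hx hadj
      have hxv : x ≠ v := by rintro rfl; exact hv hx
      by_cases hxa : G.Adj x v
      · exact htrifree {v, g v, x} (SimpleGraph.is3Clique_triple_iff.mpr
          ⟨h1 v hv, hxa.symm, hadj.symm⟩)
      · have h5 := h2 x v hxv hxa
        rw [hx] at h5
        exact h5.2 hadj
    have h4 : ∀ a b, g a ≠ a → g b ≠ b → g a = g b → a = b := by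
      intro a b ha hb hab
      by_contra hne
      by_cases hadj : G.Adj a b
      · refine htrifree {a, b, g a} (SimpleGraph.is3Clique_triple_iff.mpr
          ⟨hadj, h1 a ha, ?_⟩)
        rw [hab]; exact h1 b hb
      · exact (h2 a b hne hadj).1 hab
    have hgid : ∀ v, g v = v := by
      by_contra hex
      push_neg at hex
      obtain ⟨a₀, ha₀⟩ := hex
      set A : Finset V := Finset.univ.filter (fun v => g v ≠ v) with hA
      set M : Finset V := A.image g with hM
      have hmemA : ∀ v, v ∈ A ↔ g v ≠ v := by intro v; simp [hA]
      have hMfix : ∀ w ∈ M, g w = w := by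
        intro w hw
        simp only [hM, Finset.mem_image] at hw
        obtain ⟨a, _, rfl⟩ := hw
        exact hgg a
      have hMA : ∀ w ∈ M, ∀ x, G.Adj w x → x ∈ A := by
        intro w hw x hadj
        simp only [hM, Finset.mem_image] at hw
        obtain ⟨a, haA, rfl⟩ := hw
        rw [hmemA]
        intro hx
        exact h3 a ((hmemA a).mp haA) x hx hadj.symm
      have hcard : M.card = A.card := Finset.card_image_of_injOn (by
        intro a ha b hb hab
        exact h4 a b ((hmemA a).mp ha) ((hmemA b).mp hb) hab)
      have hNw : ∀ w ∈ M, G.neighborFinset w ∩ A = G.neighborFinset w := by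
        intro w hw
        apply Finset.inter_eq_left.mpr
        intro x hx
        exact hMA w hw x ((G.mem_neighborFinset _ _).mp hx)
      have key : ∀ (s t : Finset V), ∑ w ∈ s, (G.neighborFinset w ∩ t).card
          = ∑ w ∈ s, ∑ a ∈ t, if G.Adj w a then 1 else 0 := by
        intro s t
        refine Finset.sum_congr rfl fun w _ => ?_
        have h : G.neighborFinset w ∩ t = t.filter (fun a => G.Adj w a) := by
          ext a; simp [SimpleGraph.mem_neighborFinset, and_comm]
        rw [h, Finset.card_filter]
      have hsum : ∑ w ∈ M, (G.neighborFinset w ∩ A).card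
          = ∑ a ∈ A, (G.neighborFinset a ∩ M).card := by
        rw [key M A, key A M, Finset.sum_comm]
        refine Finset.sum_congr rfl fun a _ => Finset.sum_congr rfl fun w _ => ?_
        rw [G.adj_comm]
      have hLHS : ∑ w ∈ M, (G.neighborFinset w ∩ A).card = d * A.card := by
        rw [Finset.sum_congr rfl (fun w hw => by rw [hNw w hw, hd w])]
        rw [Finset.sum_const, smul_eq_mul, hcard, mul_comm]
      have hAM : ∀ a ∈ A, G.neighborFinset a ⊆ M := by
        by_contra hc
        push_neg at hc
        obtain ⟨a, haA, hnsub⟩ := hc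
        have hlt : (G.neighborFinset a ∩ M).card < d := by
          rw [← hd a]
          apply Finset.card_lt_card
          refine Finset.ssubset_iff_subset_ne.mpr ⟨Finset.inter_subset_left, ?_⟩
          intro h
          exact hnsub (fun x hx => (Finset.mem_inter.mp (h ▸ hx)).2)
        have hle : ∀ x ∈ A, (G.neighborFinset x ∩ M).card ≤ d := fun x _ => by
          rw [← hd x]; exact Finset.card_le_card Finset.inter_subset_left
        have hstrict : ∑ x ∈ A, (G.neighborFinset x ∩ M).card < ∑ _x ∈ A, d :=
          Finset.sum_lt_sum hle ⟨a, haA, hlt⟩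
        rw [← hsum, hLHS, Finset.sum_const, smul_eq_mul, mul_comm] at hstrict
        exact lt_irrefl _ hstrict
      have hclosed : ∀ x, (x ∈ A ∨ x ∈ M) → ∀ y, G.Adj x y → (y ∈ A ∨ y ∈ M) := by
        rintro x (hx | hx) y hadj
        · exact Or.inr (hAM x hx ((G.mem_neighborFinset _ _).mpr hadj))
        · exact Or.inl (hMA x hx y hadj)
      have hwalk : ∀ {u x : V} (_ : G.Walk u x), (u ∈ A ∨ u ∈ M) → (x ∈ A ∨ x ∈ M) := by
        intro u x p
        induction p with
        | nil => exact id
        | cons h p ih => intro hu; exact ih (hclosed _ hu _ h)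
      have hcover : ∀ x, x ∈ A ∨ x ∈ M := by
        intro x
        obtain ⟨p⟩ := hconn.preconnected a₀ x
        exact hwalk p (Or.inl ((hmemA a₀).mpr ha₀))
      refine hnonbip ⟨SimpleGraph.Coloring.mk
        (fun v => if g v = v then (0 : Fin 2) else 1) ?_⟩
      intro x y hadj
      by_cases hx : g x = x
      · have hxM : x ∈ M := (hcover x).resolve_left (by rw [hmemA]; simpa using hx)
        have hyA : y ∈ A := hMA x hxM y hadj
        have hy : g y ≠ y := (hmemA y).mp hyA
        simp [hx, hy]
      · have hxA : x ∈ A := (hmemA x).mpr hx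
        have hyM : y ∈ M := hAM x hxA ((G.mem_neighborFinset _ _).mpr hadj)
        have hy : g y = y := hMfix y hyM
        simp [hx, hy]
    have hfix : ∀ x, (⇑f)^[m - 1] (f x) = x := by
      intro x
      have h := hgid x
      rw [hgdef, show m = (m - 1) + 1 by omega, Function.iterate_succ_apply] at h
      exact h
    have finj : Function.Injective ⇑f := by
      intro a b h
      have := congrArg ((⇑f)^[m - 1]) h
      rwa [hfix, hfix] at this
    have fbij : Function.Bijective ⇑f := Finite.injective_iff_bijective.mp finj
    have hinv : ∀ a b, Gᶜ.Adj (f a) (f b) → Gᶜ.Adj a b := by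
      intro a b h
      have h' := hiter (m - 1) _ _ h
      rwa [hfix, hfix] at h'
    have hGadj : ∀ a b, G.Adj (f a) (f b) ↔ G.Adj a b := by
      intro a b
      constructor
      · intro h
        by_contra hn
        have hab : a ≠ b := by rintro rfl; exact G.irrefl h
        have hc : Gᶜ.Adj a b := (G.compl_adj a b).mpr ⟨hab, hn⟩
        exact ((G.compl_adj _ _).mp (f.map_adj hc)).2 h
      · intro h
        by_contra hn
        have hfab : f a ≠ f b := fun hh => G.ne_of_adj h (finj hh)
        have hc : Gᶜ.Adj (f a) (f b) := (G.compl_adj _ _).mpr ⟨hfab, hn⟩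
        exact ((G.compl_adj a b).mp (hinv a b hc)).2 h
    have := hasym ⟨Equiv.ofBijective ⇑f fbij, by
      intro a b
      simpa using hGadj a b⟩ v₀
    simpa using this
  · intro v
    rw [SimpleGraph.neighborSet_compl, Set.ncard_diff (by
      intro x hx
      simp only [Set.mem_singleton_iff] at hx
      subst hx
      simp)]
    have h1 : (G.neighborSet v).ncard + ((G.neighborSet v)ᶜ).ncard = Nat.card V :=
      Set.ncard_add_ncard_compl _
    have h2 := hreg v
    have h3 : Nat.card V = Fintype.card V := Nat.card_eq_fintype_card
    simp only [Set.ncard_singleton]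
    omega
end

section
/- Let f be a planar graph drawn with f faces, e edges, n vertices and n₂ vertices of degree 2, where all vertices have degree 2 or 3, every bounded face has g boundary vertices, and the subgraph is bounded by a cycle C of length |C| ≤ g with g ≥ 7. If 3n - n₂ = (f-1)g + |C| = 2e, then by Euler's formula f ≤ 2. -/
/-- The counting argument of Observation 3: with all degrees 2 or 3 (the `n₂` degree-2
vertices lying on the bounding cycle `C` of length `c ≤ g`), every bounded face having
`g ≥ 7` vertices, the double-counting identities `3n - n₂ = (f-1)g + c = 2e` together
with Euler's formula `n - e + f = 2` force `f ≤ 2`. -/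
theorem euler_face_bound (f e n n₂ c g : ℕ) (hg : 7 ≤ g) (hc : c ≤ g) (hn₂ : n₂ ≤ c)
    (hf : 1 ≤ f)
    (heuler : n + f = e + 2)
    (hcount : 3 * n = (f - 1) * g + c + n₂)
    (hdeg : 2 * e + n₂ = 3 * n) :
    f ≤ 2 := by
  by_contra h
  push_neg at h
  have hf3 : (3:ℤ) ≤ (f:ℤ) := by exact_mod_cast h
  zify [hf] at hcount
  have key : ((f:ℤ) - 2) * ((g:ℤ) - 6) = 2 * n₂ - c - g := by linarith
  nlinarith [mul_pos (by linarith : (0:ℤ) < (f:ℤ) - 2) (by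
    have : (7:ℤ) ≤ (g:ℤ) := by exact_mod_cast hg
    linarith : (0:ℤ) < (g:ℤ) - 6), (by exact_mod_cast hn₂ : (n₂:ℤ) ≤ c),
    (by exact_mod_cast hc : (c:ℤ) ≤ g)]
end

section
/- Every finite monoid M is isomorphic to the endomorphism monoid of a finite binary relational system in which every vertex has the same total degree (sum of indegrees and outdegrees over all relations). -/
namespace MERS

open scoped Classical

variable (M : Type) [Monoid M] [Fintype M]

-- finite monoid unit facts
theorem mul_one_symm {M : Type} [Monoid M] [Finite M] {a b : M} (h : a * b = 1) : b * a = 1 := by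
  have hinj : Function.Injective (fun y : M => b * y) := by
    have : Function.LeftInverse (fun y : M => a * y) (fun y : M => b * y) := by
      intro y; simp only []; rw [← mul_assoc, h, one_mul]
    exact this.injective
  obtain ⟨y, hy⟩ := (Finite.injective_iff_surjective.mp hinj) 1
  simp only [] at hy
  have hay : a = y := by
    calc a = a * (b * y) := by rw [hy, mul_one]
    _ = (a * b) * y := by rw [mul_assoc]
    _ = y := by rw [h, one_mul]
  rw [hay]; exact hy

theorem isUnit_mul_iff {M : Type} [Monoid M] [Finite M] {a b : M} :
    IsUnit (a * b) ↔ IsUnit a ∧ IsUnit b := by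
  constructor
  · intro h
    obtain ⟨v, hv1, hv2⟩ := isUnit_iff_exists.mp h
    constructor
    · exact isUnit_iff_exists.mpr ⟨b * v, by rw [← mul_assoc]; exact hv1,
        mul_one_symm (by rw [← mul_assoc]; exact hv1)⟩
    · exact isUnit_iff_exists.mpr ⟨v * a, mul_one_symm (by rw [mul_assoc]; exact hv2),
        by rw [mul_assoc]; exact hv2⟩
  · rintro ⟨ha, hb⟩; exact ha.mul hb

noncomputable section

def NN : ℕ := Fintype.card M
def rr (m a : M) : ℕ := {b : M | b * m = a}.ncard
def RR (a : M) : ℕ := ∑ m : M, rr M m a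
def Rmax : ℕ := Finset.univ.sup (RR M)
def ss : ℕ := Rmax M + 2 * NN M + 2
def ell (a : M) : ℕ := Rmax M - RR M a
def cU : ℕ := {a : M | IsUnit a}.ncard
def cZ : ℕ := {a : M | ¬IsUnit a}.ncard
def nn (i : ℕ) : ℕ := {a : M | i < ell M a}.ncard
def rho (i : ℕ) : ℕ :=
  2 * (2 + NN M + Rmax M - (cU M + (if i < ss M - 1 then cZ M else 0) + nn M i))
def KK : ℕ := 2 + NN M + Rmax M - cU M
def lam : ℕ := ss M - 3 - 2 * cZ M
def dd : ℕ := 2 * (3 + NN M + ss M + Rmax M)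

omit [Monoid M] in
theorem ncard_setOf_M (p : M → Prop) :
    {a : M | p a}.ncard = (Finset.univ.filter p).card := by
  classical
  rw [Set.ncard_eq_toFinset_card', Set.toFinset_setOf]

abbrev V := M ⊕ Option (Fin (ss M))

def tg (i : Fin (ss M)) : V M := Sum.inr (some i)
def om : V M := Sum.inr none

def act (c : M) : V M → V M
  | Sum.inl a => Sum.inl (c * a)
  | Sum.inr (some i) => if IsUnit c then Sum.inr (some i) else Sum.inr none
  | Sum.inr none => Sum.inr none

-- relations
def RelLM : V M → V M → Prop := fun x y => ∃ a : M, x = Sum.inl a ∧ y = Sum.inl a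
def RelLW : V M → V M → Prop := fun x y => ∃ w : Option (Fin (ss M)), x = Sum.inr w ∧ y = Sum.inr w
def RelA (m : M) : V M → V M → Prop := fun x y => ∃ a : M, x = Sum.inl a ∧ y = Sum.inl (a * m)
def RelTau : V M → V M → Prop := fun x y => ∃ a : M, x = Sum.inl a ∧
    ((IsUnit a ∧ ∃ i : Fin (ss M), y = tg M i) ∨
     (¬IsUnit a ∧ (y = om M ∨ ∃ i : Fin (ss M), (i : ℕ) < ss M - 1 ∧ y = tg M i)))
def RelPhi : V M → V M → Prop := fun x y => ∃ a : M, x = Sum.inl a ∧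
    (y = om M ∨ ∃ i : Fin (ss M), (i : ℕ) < ell M a ∧ y = tg M i)
def RelTheta : V M → V M → Prop := fun x y =>
    (∃ i j : Fin (ss M), (i : ℕ) < (j : ℕ) ∧ x = tg M i ∧ y = tg M j) ∨ (x = om M ∧ y = om M)
def RelLam (k : ℕ) : V M → V M → Prop := fun x y =>
    (∃ i : Fin (ss M), 2 * (k + 1) ≤ rho M i ∧ x = tg M i ∧ y = tg M i) ∨ (x = om M ∧ y = om M)
def RelOm : V M → V M → Prop := fun x y => x = om M ∧ y = om M

abbrev Ix := (Bool × (Fin 5 ⊕ M)) ⊕ (Fin (KK M) ⊕ Fin (lam M))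

def bRel : Fin 5 ⊕ M → V M → V M → Prop :=
  Sum.elim (![RelLM M, RelLW M, RelTau M, RelPhi M, RelTheta M]) (RelA M)

def Rel : Ix M → V M → V M → Prop :=
  Sum.elim (fun p => bRel M p.2) (Sum.elim (fun k => RelLam M k) (fun _ => RelOm M))

-- basic act lemmas
theorem act_om (c : M) : act M c (om M) = om M := rfl
theorem act_tg (c : M) (i : Fin (ss M)) :
    act M c (tg M i) = if IsUnit c then tg M i else om M := by
  show (if IsUnit c then (Sum.inr (some i) : V M) else Sum.inr none) = _
  split <;> rfl

theorem act_inl (c a : M) : act M c (Sum.inl a) = Sum.inl (c * a) := rfl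
theorem act_some (c : M) (i : Fin (ss M)) :
    act M c (Sum.inr (some i)) = if IsUnit c then Sum.inr (some i) else Sum.inr none := rfl
theorem act_none (c : M) : act M c (Sum.inr none) = Sum.inr none := rfl

theorem act_one : act M 1 = id := by
  funext v
  cases v with
  | inl a => simp [act_inl]
  | inr w => cases w with
    | none => rfl
    | some i => simp [act_some, isUnit_one]

theorem act_mul (c c' : M) : act M (c * c') = act M c ∘ act M c' := by
  have : Finite M := Finite.of_fintype M
  funext v
  cases v with
  | inl a => simp [act, mul_assoc]
  | inr w => cases w with
    | none => rfl
    | some i =>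
      simp only [Function.comp_apply, act_some]
      by_cases h' : IsUnit c'
      · by_cases h : IsUnit c
        · rw [if_pos (isUnit_mul_iff.mpr ⟨h, h'⟩), if_pos h', act_some, if_pos h]
        · rw [if_neg (fun hc => h (isUnit_mul_iff.mp hc).1), if_pos h', act_some, if_neg h]
      · rw [if_neg (fun hc => h' (isUnit_mul_iff.mp hc).2), if_neg h', act_none]


-- R is invariant under left unit multiplication
theorem rr_unit (u : Mˣ) (m a : M) : rr M m ((u : M) * a) = rr M m a := by
  classical
  unfold rr
  rw [ncard_setOf_M, ncard_setOf_M]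
  apply Finset.card_bij' (fun (b : M) _ => (((u⁻¹ : Mˣ) : M) * b : M)) (fun (b : M) _ => ((u : M) * b : M))
  · intro b hb
    simp only [Finset.mem_filter, Finset.mem_univ, true_and] at hb ⊢
    rw [mul_assoc, hb, ← mul_assoc, Units.inv_mul, one_mul]
  · intro b hb
    simp only [Finset.mem_filter, Finset.mem_univ, true_and] at hb ⊢
    rw [mul_assoc, hb]
  · intro b _; rw [← mul_assoc, Units.mul_inv, one_mul]
  · intro b _; rw [← mul_assoc, Units.inv_mul, one_mul]

theorem RR_unit {c : M} (hc : IsUnit c) (a : M) : RR M (c * a) = RR M a := by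
  obtain ⟨u, rfl⟩ := hc
  unfold RR
  exact Finset.sum_congr rfl fun m _ => rr_unit M u m a

theorem ell_unit {c : M} (hc : IsUnit c) (a : M) : ell M (c * a) = ell M a := by
  unfold ell; rw [RR_unit M hc]

theorem not_isUnit_mul {M : Type} [Monoid M] [Finite M] {c a : M} (ha : ¬IsUnit a) :
    ¬IsUnit (c * a) := fun h => ha (isUnit_mul_iff.mp h).2

-- invariance of all relations
theorem rel_act (c : M) (j : Ix M) (x y : V M) (h : Rel M j x y) :
    Rel M j (act M c x) (act M c y) := by
  have : Finite M := Finite.of_fintype M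
  obtain j | j := j
  · obtain ⟨b, jf | m⟩ := j
    · fin_cases jf
      · obtain ⟨a, rfl, rfl⟩ := h
        exact ⟨c * a, rfl, rfl⟩
      · obtain ⟨w, rfl, rfl⟩ := h
        cases w with
        | none => exact ⟨none, rfl, rfl⟩
        | some i =>
          show RelLW M (act M c (Sum.inr (some i))) (act M c (Sum.inr (some i)))
          rw [act_some]
          split
          · exact ⟨some i, rfl, rfl⟩
          · exact ⟨none, rfl, rfl⟩
      · -- RelTau
        obtain ⟨a, rfl, hy⟩ := h
        refine ⟨c * a, rfl, ?_⟩
        by_cases hc : IsUnit c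
        · rcases hy with ⟨ha, i, rfl⟩ | ⟨ha, hy⟩
          · exact Or.inl ⟨hc.mul ha, i, by rw [act_tg, if_pos hc]⟩
          · refine Or.inr ⟨not_isUnit_mul ha, ?_⟩
            rcases hy with rfl | ⟨i, hi, rfl⟩
            · exact Or.inl (act_om M c)
            · exact Or.inr ⟨i, hi, by rw [act_tg, if_pos hc]⟩
        · rcases hy with ⟨ha, i, rfl⟩ | ⟨ha, hy⟩
          · refine Or.inr ⟨fun hu => hc (isUnit_mul_iff.mp hu).1, Or.inl ?_⟩
            rw [act_tg, if_neg hc]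
          · refine Or.inr ⟨not_isUnit_mul ha, Or.inl ?_⟩
            rcases hy with rfl | ⟨i, _, rfl⟩
            · exact act_om M c
            · rw [act_tg, if_neg hc]
      · -- RelPhi
        obtain ⟨a, rfl, hy⟩ := h
        refine ⟨c * a, rfl, ?_⟩
        by_cases hc : IsUnit c
        · rcases hy with rfl | ⟨i, hi, rfl⟩
          · exact Or.inl (act_om M c)
          · exact Or.inr ⟨i, by rw [ell_unit M hc]; exact hi, by rw [act_tg, if_pos hc]⟩
        · rcases hy with rfl | ⟨i, _, rfl⟩
          · exact Or.inl (act_om M c)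
          · exact Or.inl (by rw [act_tg, if_neg hc])
      · -- RelTheta
        rcases h with ⟨i, jj, hij, rfl, rfl⟩ | ⟨rfl, rfl⟩
        · by_cases hc : IsUnit c
          · exact Or.inl ⟨i, jj, hij, by rw [act_tg, if_pos hc], by rw [act_tg, if_pos hc]⟩
          · exact Or.inr ⟨by rw [act_tg, if_neg hc], by rw [act_tg, if_neg hc]⟩
        · exact Or.inr ⟨act_om M c, act_om M c⟩
    · -- RelA m
      obtain ⟨a, rfl, rfl⟩ := h
      exact ⟨c * a, rfl, by rw [act_inl, mul_assoc]⟩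
  · obtain k | l := j
    · rcases h with ⟨i, hk, rfl, rfl⟩ | ⟨rfl, rfl⟩
      · by_cases hc : IsUnit c
        · exact Or.inl ⟨i, hk, by rw [act_tg, if_pos hc], by rw [act_tg, if_pos hc]⟩
        · exact Or.inr ⟨by rw [act_tg, if_neg hc], by rw [act_tg, if_neg hc]⟩
      · exact Or.inr ⟨act_om M c, act_om M c⟩
    · obtain ⟨rfl, rfl⟩ := h
      exact ⟨act_om M c, act_om M c⟩


-- arithmetic facts
theorem RR_le_Rmax (a : M) : RR M a ≤ Rmax M := Finset.le_sup (Finset.mem_univ a)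

theorem ell_add_RR (a : M) : ell M a + RR M a = Rmax M :=
  Nat.sub_add_cancel (RR_le_Rmax M a)

theorem sum_rr (m : M) : ∑ a : M, rr M m a = NN M := by
  classical
  unfold rr NN
  simp only [ncard_setOf_M]
  rw [← Finset.card_eq_sum_card_fiberwise (f := fun b : M => b * m) (t := Finset.univ)
    (fun b _ => Finset.mem_univ _)]
  exact Finset.card_univ

theorem NN_pos : 0 < NN M := Fintype.card_pos

theorem NN_le_Rmax : NN M ≤ Rmax M := by
  have h1 : ∑ a : M, RR M a = NN M * NN M := by
    unfold RR
    rw [Finset.sum_comm]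
    rw [Finset.sum_congr rfl fun m _ => sum_rr M m, Finset.sum_const, Finset.card_univ,
      smul_eq_mul, show Fintype.card M = NN M from rfl]
  have h2 : ∑ a : M, RR M a ≤ ∑ _a : M, Rmax M :=
    Finset.sum_le_sum fun a _ => RR_le_Rmax M a
  simp only [Finset.sum_const, Finset.card_univ, smul_eq_mul] at h2
  rw [h1] at h2
  rw [show Fintype.card M = NN M from rfl] at h2
  have := NN_pos M
  exact Nat.le_of_mul_le_mul_left h2 this

theorem cU_add_cZ : cU M + cZ M = NN M := by
  classical
  unfold cU cZ NN
  rw [ncard_setOf_M, ncard_setOf_M, Finset.card_filter_add_card_filter_not]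
  exact Finset.card_univ

omit [Monoid M] in
theorem ncard_le_card (S : Set M) : S.ncard ≤ NN M := by
  have h := Set.ncard_le_ncard (Set.subset_univ S) (Set.toFinite _)
  rwa [Set.ncard_univ, Nat.card_eq_fintype_card] at h

theorem nn_le_NN (i : ℕ) : nn M i ≤ NN M := ncard_le_card M _
theorem cU_le_NN : cU M ≤ NN M := ncard_le_card M _
theorem cZ_le_NN : cZ M ≤ NN M := ncard_le_card M _

theorem inner_le (i : ℕ) :
    cU M + (if i < ss M - 1 then cZ M else 0) + nn M i ≤ 2 + NN M + Rmax M := by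
  have h1 : cU M + (if i < ss M - 1 then cZ M else 0) ≤ NN M := by
    split
    · rw [cU_add_cZ]
    · simpa using cU_le_NN M
  have h2 := nn_le_NN M i
  have h3 := NN_le_Rmax M
  omega

theorem rho_eq (i : ℕ) :
    (cU M + (if i < ss M - 1 then cZ M else 0) + nn M i) + rho M i / 2 = 2 + NN M + Rmax M := by
  unfold rho
  rw [Nat.mul_div_cancel_left _ (by norm_num : 0 < 2)]
  exact Nat.add_sub_cancel' (inner_le M i)

theorem rho_half_le_KK (i : ℕ) : rho M i / 2 ≤ KK M := by
  unfold rho KK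
  rw [Nat.mul_div_cancel_left _ (by norm_num : 0 < 2)]
  apply Nat.sub_le_sub_left
  omega

theorem ell_le_Rmax (a : M) : ell M a ≤ Rmax M := Nat.sub_le _ _

theorem Rmax_lt_ss : Rmax M < ss M := by
  unfold ss
  have := NN_pos M
  omega

-- counting helpers
theorem tg_injective : Function.Injective (tg M) := by
  intro i j h
  simpa [tg] using h

theorem ncard_fin_lt (L : ℕ) (h : L ≤ ss M) : {i : Fin (ss M) | (i : ℕ) < L}.ncard = L := by
  have hset : {i : Fin (ss M) | (i : ℕ) < L} = Set.range (Fin.castLE h) := by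
    ext i
    simp only [Set.mem_setOf_eq, Set.mem_range]
    constructor
    · intro hi; exact ⟨⟨(i : ℕ), hi⟩, by ext; simp⟩
    · rintro ⟨j, rfl⟩; exact j.2
  rw [hset, ← Set.image_univ, Set.ncard_image_of_injective _ (Fin.castLE_injective h),
    Set.ncard_univ]
  simp

theorem ncard_fin_ge (L : ℕ) : {i : Fin (ss M) | L ≤ (i : ℕ)}.ncard = ss M - L := by
  rcases le_or_gt L (ss M) with h | h
  · have hc : {i : Fin (ss M) | L ≤ (i : ℕ)} = {i : Fin (ss M) | (i : ℕ) < L}ᶜ := by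
      ext i; simp [not_lt]
    rw [hc]
    have := Set.ncard_add_ncard_compl {i : Fin (ss M) | (i : ℕ) < L}
    rw [ncard_fin_lt M L h] at this
    have hcard : Nat.card (Fin (ss M)) = ss M := by simp
    omega
  · have h1 : {i : Fin (ss M) | L ≤ (i : ℕ)} = ∅ := by
      ext i; simp only [Set.mem_setOf_eq, Set.mem_empty_iff_false, iff_false, not_le]
      exact lt_trans i.2 h
    rw [h1, Set.ncard_empty]
    omega


-- degree counting
def outC (j : Ix M) (v : V M) : ℕ := {w | Rel M j v w}.ncard
def inC (j : Ix M) (v : V M) : ℕ := {w | Rel M j w v}.ncard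

theorem ncard_image_inl (S : Set M) : ((Sum.inl '' S) : Set (V M)).ncard = S.ncard :=
  Set.ncard_image_of_injective _ Sum.inl_injective

theorem ncard_image_tg (S : Set (Fin (ss M))) : ((tg M '' S) : Set (V M)).ncard = S.ncard :=
  Set.ncard_image_of_injective _ (tg_injective M)

-- LM counts
theorem oLM_inl (a : M) : {w | RelLM M (Sum.inl a) w}.ncard = 1 := by
  have : {w | RelLM M (Sum.inl a) w} = {Sum.inl a} := by
    ext w; simp [RelLM]
  rw [this, Set.ncard_singleton]

theorem iLM_inl (a : M) : {w | RelLM M w (Sum.inl a)}.ncard = 1 := by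
  have : {w | RelLM M w (Sum.inl a)} = {Sum.inl a} := by
    ext w; constructor
    · rintro ⟨b, rfl, hb⟩; cases hb; rfl
    · rintro rfl; exact ⟨a, rfl, rfl⟩
  rw [this, Set.ncard_singleton]

theorem oLM_inr (z : Option (Fin (ss M))) : {w | RelLM M (Sum.inr z) w}.ncard = 0 := by
  have : {w | RelLM M (Sum.inr z) w} = ∅ := by
    ext w; simp [RelLM]
  rw [this, Set.ncard_empty]

theorem iLM_inr (z : Option (Fin (ss M))) : {w | RelLM M w (Sum.inr z)}.ncard = 0 := by
  have : {w | RelLM M w (Sum.inr z)} = ∅ := by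
    ext w; constructor
    · rintro ⟨b, _, hb⟩; simp at hb
    · simp
  rw [this, Set.ncard_empty]

-- LW counts
theorem oLW_inl (a : M) : {w | RelLW M (Sum.inl a) w}.ncard = 0 := by
  have : {w | RelLW M (Sum.inl a) w} = ∅ := by
    ext w; simp [RelLW]
  rw [this, Set.ncard_empty]

theorem iLW_inl (a : M) : {w | RelLW M w (Sum.inl a)}.ncard = 0 := by
  have : {w | RelLW M w (Sum.inl a)} = ∅ := by
    ext w; constructor
    · rintro ⟨b, _, hb⟩; simp at hb
    · simp
  rw [this, Set.ncard_empty]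

theorem oLW_inr (z : Option (Fin (ss M))) : {w | RelLW M (Sum.inr z) w}.ncard = 1 := by
  have : {w | RelLW M (Sum.inr z) w} = {Sum.inr z} := by
    ext w; simp [RelLW]
  rw [this, Set.ncard_singleton]

theorem iLW_inr (z : Option (Fin (ss M))) : {w | RelLW M w (Sum.inr z)}.ncard = 1 := by
  have : {w | RelLW M w (Sum.inr z)} = {Sum.inr z} := by
    ext w; constructor
    · rintro ⟨b, rfl, hb⟩; cases hb; rfl
    · rintro rfl; exact ⟨z, rfl, rfl⟩
  rw [this, Set.ncard_singleton]

-- A counts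
theorem oA_inl (m a : M) : {w | RelA M m (Sum.inl a) w}.ncard = 1 := by
  have : {w | RelA M m (Sum.inl a) w} = {Sum.inl (a * m)} := by
    ext w; simp [RelA]
  rw [this, Set.ncard_singleton]

theorem iA_inl (m a : M) : {w | RelA M m w (Sum.inl a)}.ncard = rr M m a := by
  have : {w | RelA M m w (Sum.inl a)} = Sum.inl '' {b | b * m = a} := by
    ext w; constructor
    · rintro ⟨b, rfl, hb⟩
      exact ⟨b, by simpa using hb.symm, rfl⟩
    · rintro ⟨b, hb, rfl⟩; exact ⟨b, rfl, by rw [hb]⟩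
  rw [this, ncard_image_inl]
  rfl

theorem oA_inr (m : M) (z : Option (Fin (ss M))) : {w | RelA M m (Sum.inr z) w}.ncard = 0 := by
  have : {w | RelA M m (Sum.inr z) w} = ∅ := by
    ext w; simp [RelA]
  rw [this, Set.ncard_empty]

theorem iA_inr (m : M) (z : Option (Fin (ss M))) : {w | RelA M m w (Sum.inr z)}.ncard = 0 := by
  have : {w | RelA M m w (Sum.inr z)} = ∅ := by
    ext w; constructor
    · rintro ⟨b, _, hb⟩; simp at hb
    · simp
  rw [this, Set.ncard_empty]

-- Om counts
theorem oOm_om : {w | RelOm M (om M) w}.ncard = 1 := by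
  have : {w | RelOm M (om M) w} = {om M} := by
    ext w; simp [RelOm]
  rw [this, Set.ncard_singleton]

theorem iOm_om : {w | RelOm M w (om M)}.ncard = 1 := by
  have : {w | RelOm M w (om M)} = {om M} := by
    ext w; simp [RelOm]
  rw [this, Set.ncard_singleton]

theorem oOm_ne (v : V M) (h : v ≠ om M) : {w | RelOm M v w}.ncard = 0 := by
  have : {w | RelOm M v w} = ∅ := by
    ext w; simp only [RelOm, Set.mem_setOf_eq, Set.mem_empty_iff_false, iff_false]
    rintro ⟨rfl, _⟩; exact h rfl
  rw [this, Set.ncard_empty]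

theorem iOm_ne (v : V M) (h : v ≠ om M) : {w | RelOm M w v}.ncard = 0 := by
  have : {w | RelOm M w v} = ∅ := by
    ext w; simp only [RelOm, Set.mem_setOf_eq, Set.mem_empty_iff_false, iff_false]
    rintro ⟨_, rfl⟩; exact h rfl
  rw [this, Set.ncard_empty]


theorem om_ne_tg (i : Fin (ss M)) : om M ≠ tg M i := by simp [om, tg]
theorem tg_ne_om (i : Fin (ss M)) : tg M i ≠ om M := by simp [om, tg]
theorem inl_ne_om (a : M) : (Sum.inl a : V M) ≠ om M := by simp [om]
theorem inl_ne_tg (a : M) (i : Fin (ss M)) : (Sum.inl a : V M) ≠ tg M i := by simp [tg]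

-- Tau counts
theorem oTau_inl (a : M) : {w | RelTau M (Sum.inl a) w}.ncard = ss M := by
  by_cases ha : IsUnit a
  · have : {w | RelTau M (Sum.inl a) w} = tg M '' Set.univ := by
      ext w; constructor
      · rintro ⟨b, hb, h⟩
        cases hb
        rcases h with ⟨_, i, rfl⟩ | ⟨hb', _⟩
        · exact ⟨i, trivial, rfl⟩
        · exact absurd ha hb'
      · rintro ⟨i, _, rfl⟩; exact ⟨a, rfl, Or.inl ⟨ha, i, rfl⟩⟩
    rw [this, ncard_image_tg, Set.ncard_univ]; simp
  · have : {w | RelTau M (Sum.inl a) w} =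
        insert (om M) (tg M '' {i | (i : ℕ) < ss M - 1}) := by
      ext w; constructor
      · rintro ⟨b, hb, h⟩
        cases hb
        rcases h with ⟨ha', _⟩ | ⟨_, rfl | ⟨i, hi, rfl⟩⟩
        · exact absurd ha' ha
        · exact Set.mem_insert _ _
        · exact Set.mem_insert_of_mem _ ⟨i, hi, rfl⟩
      · rintro (rfl | ⟨i, hi, rfl⟩)
        · exact ⟨a, rfl, Or.inr ⟨ha, Or.inl rfl⟩⟩
        · exact ⟨a, rfl, Or.inr ⟨ha, Or.inr ⟨i, hi, rfl⟩⟩⟩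
    rw [this, Set.ncard_insert_of_notMem (by rintro ⟨i, _, hi⟩; exact om_ne_tg M i hi.symm)
      (Set.toFinite _), ncard_image_tg, ncard_fin_lt M _ (Nat.sub_le _ _)]
    have h1 : 1 ≤ ss M := by have := Rmax_lt_ss M; omega
    omega

theorem oTau_inr (z : Option (Fin (ss M))) : {w | RelTau M (Sum.inr z) w}.ncard = 0 := by
  have : {w | RelTau M (Sum.inr z) w} = ∅ := by
    ext w; constructor
    · rintro ⟨b, hb, _⟩; simp at hb
    · simp
  rw [this, Set.ncard_empty]

theorem iTau_inl (a : M) : {w | RelTau M w (Sum.inl a)}.ncard = 0 := by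
  have : {w | RelTau M w (Sum.inl a)} = ∅ := by
    ext w; constructor
    · rintro ⟨b, _, h⟩
      rcases h with ⟨_, i, hi⟩ | ⟨_, hi | ⟨i, _, hi⟩⟩
      · exact (inl_ne_tg M a i) hi
      · exact (inl_ne_om M a) hi
      · exact (inl_ne_tg M a i) hi
    · simp
  rw [this, Set.ncard_empty]

theorem iTau_tg (i : Fin (ss M)) :
    {w | RelTau M w (tg M i)}.ncard = cU M + (if (i : ℕ) < ss M - 1 then cZ M else 0) := by
  classical
  by_cases hi : (i : ℕ) < ss M - 1
  · have : {w | RelTau M w (tg M i)} = Sum.inl '' Set.univ := by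
      ext w; constructor
      · rintro ⟨b, rfl, _⟩; exact ⟨b, trivial, rfl⟩
      · rintro ⟨b, _, rfl⟩
        by_cases hb : IsUnit b
        · exact ⟨b, rfl, Or.inl ⟨hb, i, rfl⟩⟩
        · exact ⟨b, rfl, Or.inr ⟨hb, Or.inr ⟨i, hi, rfl⟩⟩⟩
    rw [this, ncard_image_inl, Set.ncard_univ, if_pos hi]
    rw [show Nat.card M = NN M from Nat.card_eq_fintype_card, cU_add_cZ]
  · have : {w | RelTau M w (tg M i)} = Sum.inl '' {a | IsUnit a} := by
      ext w; constructor
      · rintro ⟨b, rfl, h⟩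
        rcases h with ⟨hb, _⟩ | ⟨hb, h' | ⟨i', hi', h'⟩⟩
        · exact ⟨b, hb, rfl⟩
        · exact absurd h'.symm (om_ne_tg M i)
        · obtain rfl : i = i' := tg_injective M h'
          exact absurd hi' hi
      · rintro ⟨b, hb, rfl⟩; exact ⟨b, rfl, Or.inl ⟨hb, i, rfl⟩⟩
    rw [this, ncard_image_inl, if_neg hi]
    rfl

theorem iTau_om : {w | RelTau M w (om M)}.ncard = cZ M := by
  classical
  have : {w | RelTau M w (om M)} = Sum.inl '' {a | ¬IsUnit a} := by
    ext w; constructor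
    · rintro ⟨b, rfl, h⟩
      rcases h with ⟨_, i, hi⟩ | ⟨hb, _⟩
      · exact absurd hi.symm (tg_ne_om M i)
      · exact ⟨b, hb, rfl⟩
    · rintro ⟨b, hb, rfl⟩; exact ⟨b, rfl, Or.inr ⟨hb, Or.inl rfl⟩⟩
  rw [this, ncard_image_inl]
  rfl

theorem oTau_inr' (i : Fin (ss M)) : {w | RelTau M (tg M i) w}.ncard = 0 := oTau_inr M (some i)
theorem oTau_inr'' : {w | RelTau M (om M) w}.ncard = 0 := oTau_inr M none

-- Phi counts
theorem oPhi_inl (a : M) : {w | RelPhi M (Sum.inl a) w}.ncard = ell M a + 1 := by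
  have : {w | RelPhi M (Sum.inl a) w} =
      insert (om M) (tg M '' {i | (i : ℕ) < ell M a}) := by
    ext w; constructor
    · rintro ⟨b, hb, h⟩
      cases hb
      rcases h with rfl | ⟨i, hi, rfl⟩
      · exact Set.mem_insert _ _
      · exact Set.mem_insert_of_mem _ ⟨i, hi, rfl⟩
    · rintro (rfl | ⟨i, hi, rfl⟩)
      · exact ⟨a, rfl, Or.inl rfl⟩
      · exact ⟨a, rfl, Or.inr ⟨i, hi, rfl⟩⟩
  rw [this, Set.ncard_insert_of_notMem (by rintro ⟨i, _, hi⟩; exact om_ne_tg M i hi.symm)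
    (Set.toFinite _), ncard_image_tg,
    ncard_fin_lt M _ (le_trans (ell_le_Rmax M a) (le_of_lt (Rmax_lt_ss M)))]

theorem oPhi_inr (z : Option (Fin (ss M))) : {w | RelPhi M (Sum.inr z) w}.ncard = 0 := by
  have : {w | RelPhi M (Sum.inr z) w} = ∅ := by
    ext w; constructor
    · rintro ⟨b, hb, _⟩; simp at hb
    · simp
  rw [this, Set.ncard_empty]

theorem iPhi_inl (a : M) : {w | RelPhi M w (Sum.inl a)}.ncard = 0 := by
  have : {w | RelPhi M w (Sum.inl a)} = ∅ := by
    ext w; constructor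
    · rintro ⟨b, _, h⟩
      rcases h with hi | ⟨i, _, hi⟩
      · exact (inl_ne_om M a) hi
      · exact (inl_ne_tg M a i) hi
    · simp
  rw [this, Set.ncard_empty]

theorem iPhi_tg (i : Fin (ss M)) : {w | RelPhi M w (tg M i)}.ncard = nn M ((i : ℕ)) := by
  classical
  have : {w | RelPhi M w (tg M i)} = Sum.inl '' {a | (i : ℕ) < ell M a} := by
    ext w; constructor
    · rintro ⟨b, rfl, h⟩
      rcases h with h' | ⟨i', hi', h'⟩
      · exact absurd h'.symm (om_ne_tg M i)
      · obtain rfl : i = i' := tg_injective M h'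
        exact ⟨b, hi', rfl⟩
    · rintro ⟨b, hb, rfl⟩; exact ⟨b, rfl, Or.inr ⟨i, hb, rfl⟩⟩
  rw [this, ncard_image_inl]
  rfl

theorem iPhi_om : {w | RelPhi M w (om M)}.ncard = NN M := by
  have : {w | RelPhi M w (om M)} = Sum.inl '' Set.univ := by
    ext w; constructor
    · rintro ⟨b, rfl, _⟩; exact ⟨b, trivial, rfl⟩
    · rintro ⟨b, _, rfl⟩; exact ⟨b, rfl, Or.inl rfl⟩
  rw [this, ncard_image_inl, Set.ncard_univ]
  exact Nat.card_eq_fintype_card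

theorem oPhi_inr' (i : Fin (ss M)) : {w | RelPhi M (tg M i) w}.ncard = 0 := oPhi_inr M (some i)
theorem oPhi_inr'' : {w | RelPhi M (om M) w}.ncard = 0 := oPhi_inr M none

-- Theta counts
theorem oTh_inl (a : M) : {w | RelTheta M (Sum.inl a) w}.ncard = 0 := by
  have : {w | RelTheta M (Sum.inl a) w} = ∅ := by
    ext w; constructor
    · rintro (⟨i, j, _, hi, _⟩ | ⟨hi, _⟩)
      · exact (inl_ne_tg M a i) hi
      · exact (inl_ne_om M a) hi
    · simp
  rw [this, Set.ncard_empty]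

theorem iTh_inl (a : M) : {w | RelTheta M w (Sum.inl a)}.ncard = 0 := by
  have : {w | RelTheta M w (Sum.inl a)} = ∅ := by
    ext w; constructor
    · rintro (⟨i, j, _, _, hj⟩ | ⟨_, hj⟩)
      · exact (inl_ne_tg M a j) hj
      · exact (inl_ne_om M a) hj
    · simp
  rw [this, Set.ncard_empty]

theorem oTh_tg (i : Fin (ss M)) :
    {w | RelTheta M (tg M i) w}.ncard = ss M - ((i : ℕ) + 1) := by
  have : {w | RelTheta M (tg M i) w} = tg M '' {j | (i : ℕ) + 1 ≤ (j : ℕ)} := by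
    ext w; constructor
    · rintro (⟨i', j, hij, hi, rfl⟩ | ⟨hi, _⟩)
      · obtain rfl : i = i' := tg_injective M hi
        exact ⟨j, by simp only [Set.mem_setOf_eq]; omega, rfl⟩
      · exact absurd hi (tg_ne_om M i)
    · rintro ⟨j, hj, rfl⟩
      simp only [Set.mem_setOf_eq] at hj
      exact Or.inl ⟨i, j, by omega, rfl, rfl⟩
  rw [this, ncard_image_tg, ncard_fin_ge]

theorem iTh_tg (i : Fin (ss M)) : {w | RelTheta M w (tg M i)}.ncard = (i : ℕ) := by
  have : {w | RelTheta M w (tg M i)} = tg M '' {j | (j : ℕ) < (i : ℕ)} := by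
    ext w; constructor
    · rintro (⟨i', j, hij, rfl, hj⟩ | ⟨_, hj⟩)
      · obtain rfl : i = j := tg_injective M hj
        exact ⟨i', hij, rfl⟩
      · exact absurd hj (om_ne_tg M i).symm
    · rintro ⟨j, hj, rfl⟩
      exact Or.inl ⟨j, i, hj, rfl, rfl⟩
  rw [this, ncard_image_tg, ncard_fin_lt M _ (le_of_lt i.2)]

theorem oTh_om : {w | RelTheta M (om M) w}.ncard = 1 := by
  have : {w | RelTheta M (om M) w} = {om M} := by
    ext w; constructor
    · rintro (⟨i, j, _, hi, _⟩ | ⟨_, rfl⟩)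
      · exact absurd hi (om_ne_tg M i)
      · rfl
    · rintro rfl; exact Or.inr ⟨rfl, rfl⟩
  rw [this, Set.ncard_singleton]

theorem iTh_om : {w | RelTheta M w (om M)}.ncard = 1 := by
  have : {w | RelTheta M w (om M)} = {om M} := by
    ext w; constructor
    · rintro (⟨i, j, _, _, hj⟩ | ⟨rfl, _⟩)
      · exact absurd hj (om_ne_tg M j)
      · rfl
    · rintro rfl; exact Or.inr ⟨rfl, rfl⟩
  rw [this, Set.ncard_singleton]

-- Lam counts
theorem oLam_inl (k : ℕ) (a : M) : {w | RelLam M k (Sum.inl a) w}.ncard = 0 := by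
  have : {w | RelLam M k (Sum.inl a) w} = ∅ := by
    ext w; constructor
    · rintro (⟨i, _, hi, _⟩ | ⟨hi, _⟩)
      · exact (inl_ne_tg M a i) hi
      · exact (inl_ne_om M a) hi
    · simp
  rw [this, Set.ncard_empty]

theorem iLam_inl (k : ℕ) (a : M) : {w | RelLam M k w (Sum.inl a)}.ncard = 0 := by
  have : {w | RelLam M k w (Sum.inl a)} = ∅ := by
    ext w; constructor
    · rintro (⟨i, _, _, hi⟩ | ⟨_, hi⟩)
      · exact (inl_ne_tg M a i) hi
      · exact (inl_ne_om M a) hi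
    · simp
  rw [this, Set.ncard_empty]

theorem oLam_tg (k : ℕ) (i : Fin (ss M)) :
    {w | RelLam M k (tg M i) w}.ncard = if 2 * (k + 1) ≤ rho M i then 1 else 0 := by
  classical
  by_cases hk : 2 * (k + 1) ≤ rho M ((i : ℕ))
  · have : {w | RelLam M k (tg M i) w} = {tg M i} := by
      ext w; constructor
      · rintro (⟨i', hi', h1, rfl⟩ | ⟨h1, _⟩)
        · rw [(tg_injective M h1 : i = i')]; rfl
        · exact absurd h1 (tg_ne_om M i)
      · rintro rfl; exact Or.inl ⟨i, hk, rfl, rfl⟩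
    rw [this, Set.ncard_singleton, if_pos hk]
  · have : {w | RelLam M k (tg M i) w} = ∅ := by
      ext w; constructor
      · rintro (⟨i', hi', h1, rfl⟩ | ⟨h1, _⟩)
        · rw [(tg_injective M h1 : i = i')] at hk; exact hk hi'
        · exact absurd h1 (tg_ne_om M i)
      · simp
    rw [this, Set.ncard_empty, if_neg hk]

theorem iLam_tg (k : ℕ) (i : Fin (ss M)) :
    {w | RelLam M k w (tg M i)}.ncard = if 2 * (k + 1) ≤ rho M i then 1 else 0 := by
  classical
  by_cases hk : 2 * (k + 1) ≤ rho M ((i : ℕ))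
  · have : {w | RelLam M k w (tg M i)} = {tg M i} := by
      ext w; constructor
      · rintro (⟨i', hi', rfl, h1⟩ | ⟨_, h1⟩)
        · rw [(tg_injective M h1 : i = i')]; rfl
        · exact absurd h1 (om_ne_tg M i).symm
      · rintro rfl; exact Or.inl ⟨i, hk, rfl, rfl⟩
    rw [this, Set.ncard_singleton, if_pos hk]
  · have : {w | RelLam M k w (tg M i)} = ∅ := by
      ext w; constructor
      · rintro (⟨i', hi', rfl, h1⟩ | ⟨_, h1⟩)
        · rw [(tg_injective M h1 : i = i')] at hk; exact hk hi'
        · exact absurd h1 (om_ne_tg M i).symm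
      · simp
    rw [this, Set.ncard_empty, if_neg hk]

theorem oLam_om (k : ℕ) : {w | RelLam M k (om M) w}.ncard = 1 := by
  have : {w | RelLam M k (om M) w} = {om M} := by
    ext w; constructor
    · rintro (⟨i, _, h1, _⟩ | ⟨_, rfl⟩)
      · exact absurd h1 (om_ne_tg M i)
      · rfl
    · rintro rfl; exact Or.inr ⟨rfl, rfl⟩
  rw [this, Set.ncard_singleton]

theorem iLam_om (k : ℕ) : {w | RelLam M k w (om M)}.ncard = 1 := by
  have : {w | RelLam M k w (om M)} = {om M} := by
    ext w; constructor
    · rintro (⟨i, _, _, h1⟩ | ⟨rfl, _⟩)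
      · exact absurd h1 (om_ne_tg M i)
      · rfl
    · rintro rfl; exact Or.inr ⟨rfl, rfl⟩
  rw [this, Set.ncard_singleton]


-- general fin counting
theorem ncard_setOf_fin {n : ℕ} (p : Fin n → Prop) :
    {x : Fin n | p x}.ncard = (Finset.univ.filter p).card := by
  classical
  rw [Set.ncard_eq_toFinset_card', Set.toFinset_setOf]

theorem ncard_fin_lt' (n L : ℕ) (h : L ≤ n) : {i : Fin n | (i : ℕ) < L}.ncard = L := by
  have hset : {i : Fin n | (i : ℕ) < L} = Set.range (Fin.castLE h) := by
    ext i
    simp only [Set.mem_setOf_eq, Set.mem_range]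
    constructor
    · intro hi; exact ⟨⟨(i : ℕ), hi⟩, by ext; simp⟩
    · rintro ⟨j, rfl⟩; exact j.2
  rw [hset, ← Set.image_univ, Set.ncard_image_of_injective _ (Fin.castLE_injective h),
    Set.ncard_univ]
  simp

omit [Monoid M] [Fintype M] in
theorem card_fin_lt {n L : ℕ} (h : L ≤ n) {dp : DecidablePred (fun i : Fin n => (i : ℕ) < L)} :
    (Finset.univ.filter (fun i : Fin n => (i : ℕ) < L)).card = L := by
  rw [← Fintype.card_subtype]
  have e : {i : Fin n // (i : ℕ) < L} ≃ Fin L :=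
    ⟨fun x => ⟨(x.1 : ℕ), x.2⟩, fun j => ⟨⟨(j : ℕ), lt_of_lt_of_le j.2 h⟩, j.2⟩,
      fun x => by ext; rfl, fun j => by ext; rfl⟩
  rw [Fintype.card_congr e]
  exact Fintype.card_fin L

theorem sum_lam_tg (i : ℕ) :
    ∑ k : Fin (KK M), (if 2 * ((k : ℕ) + 1) ≤ rho M i then 1 else 0) = rho M i / 2 := by
  classical
  have hrho : rho M i = 2 * (rho M i / 2) := by
    unfold rho
    rw [Nat.mul_div_cancel_left _ (by norm_num : 0 < 2)]
  rw [Finset.sum_congr rfl (fun k _ => by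
    rw [show (if 2 * ((k : ℕ) + 1) ≤ rho M i then (1:ℕ) else 0)
        = (if (k : ℕ) < rho M i / 2 then 1 else 0) from by
      congr 1
      rw [eq_iff_iff]
      constructor
      · intro h; omega
      · intro h; omega])]
  rw [← Finset.card_filter]
  exact card_fin_lt (rho_half_le_KK M i)

-- Rel reduction lemmas
theorem Rel_b (b : Bool) (j : Fin 5 ⊕ M) : Rel M (Sum.inl (b, j)) = bRel M j := rfl
theorem bRel_0 : bRel M (Sum.inl 0) = RelLM M := rfl
theorem bRel_1 : bRel M (Sum.inl 1) = RelLW M := rfl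
theorem bRel_2 : bRel M (Sum.inl 2) = RelTau M := rfl
theorem bRel_3 : bRel M (Sum.inl 3) = RelPhi M := rfl
theorem bRel_4 : bRel M (Sum.inl 4) = RelTheta M := rfl
theorem bRel_A (m : M) : bRel M (Sum.inr m) = RelA M m := rfl
theorem Rel_lam (k : Fin (KK M)) : Rel M (Sum.inr (Sum.inl k)) = RelLam M (k : ℕ) := rfl
theorem Rel_om (l : Fin (lam M)) : Rel M (Sum.inr (Sum.inr l)) = RelOm M := rfl

-- base sums
theorem base_sum_inl (a : M) (b : Bool) :
    ∑ j : Fin 5 ⊕ M, (outC M (Sum.inl (b, j)) (Sum.inl a) + inC M (Sum.inl (b, j)) (Sum.inl a))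
      = 3 + NN M + ss M + Rmax M := by
  rw [Fintype.sum_sum_type]
  have h5 : ∑ jf : Fin 5,
      (outC M (Sum.inl (b, Sum.inl jf)) (Sum.inl a) + inC M (Sum.inl (b, Sum.inl jf)) (Sum.inl a))
      = 2 + 0 + ss M + (ell M a + 1) + 0 := by
    rw [Fin.sum_univ_five]
    unfold outC inC
    rw [Rel_b M b (Sum.inl 0), Rel_b M b (Sum.inl 1), Rel_b M b (Sum.inl 2),
      Rel_b M b (Sum.inl 3), Rel_b M b (Sum.inl 4), bRel_0, bRel_1, bRel_2, bRel_3, bRel_4]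
    rw [oLM_inl, iLM_inl, oLW_inl, iLW_inl, oTau_inl, iTau_inl, oPhi_inl, iPhi_inl,
      oTh_inl, iTh_inl]
    omega
  have hM : ∑ m : M,
      (outC M (Sum.inl (b, Sum.inr m)) (Sum.inl a) + inC M (Sum.inl (b, Sum.inr m)) (Sum.inl a))
      = NN M + RR M a := by
    have : ∀ m : M,
        outC M (Sum.inl (b, Sum.inr m)) (Sum.inl a) + inC M (Sum.inl (b, Sum.inr m)) (Sum.inl a)
        = 1 + rr M m a := by
      intro m
      unfold outC inC
      rw [Rel_b, bRel_A, oA_inl, iA_inl]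
    rw [Finset.sum_congr rfl (fun m _ => this m), Finset.sum_add_distrib, Finset.sum_const,
      Finset.card_univ, smul_eq_mul, mul_one]
    rfl
  rw [h5, hM]
  have h1 := ell_add_RR M a
  omega

theorem deg_inl (a : M) :
    ∑ j : Ix M, (outC M j (Sum.inl a) + inC M j (Sum.inl a)) = dd M := by
  rw [Fintype.sum_sum_type, Fintype.sum_prod_type, Fintype.sum_sum_type]
  have hK : ∑ k : Fin (KK M),
      (outC M (Sum.inr (Sum.inl k)) (Sum.inl a) + inC M (Sum.inr (Sum.inl k)) (Sum.inl a)) = 0 := by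
    apply Finset.sum_eq_zero
    intro k _
    unfold outC inC
    rw [Rel_lam, oLam_inl, iLam_inl]
    rfl
  have hL : ∑ l : Fin (lam M),
      (outC M (Sum.inr (Sum.inr l)) (Sum.inl a) + inC M (Sum.inr (Sum.inr l)) (Sum.inl a)) = 0 := by
    apply Finset.sum_eq_zero
    intro l _
    unfold outC inC
    rw [Rel_om, oOm_ne M _ (inl_ne_om M a), iOm_ne M _ (inl_ne_om M a)]
    rfl
  rw [hK, hL]
  rw [Finset.sum_congr rfl (fun b _ => base_sum_inl M a b)]
  simp only [Finset.sum_const, Finset.card_univ, Fintype.card_bool, smul_eq_mul]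
  unfold dd
  ring


theorem base_sum_tg (i : Fin (ss M)) (b : Bool) :
    ∑ j : Fin 5 ⊕ M, (outC M (Sum.inl (b, j)) (tg M i) + inC M (Sum.inl (b, j)) (tg M i))
      = 2 + (cU M + (if (i : ℕ) < ss M - 1 then cZ M else 0)) + nn M (i : ℕ)
        + (ss M - ((i : ℕ) + 1)) + (i : ℕ) := by
  rw [Fintype.sum_sum_type]
  have h5 : ∑ jf : Fin 5,
      (outC M (Sum.inl (b, Sum.inl jf)) (tg M i) + inC M (Sum.inl (b, Sum.inl jf)) (tg M i))
      = 2 + (cU M + (if (i : ℕ) < ss M - 1 then cZ M else 0)) + nn M (i : ℕ)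
        + (ss M - ((i : ℕ) + 1)) + (i : ℕ) := by
    rw [Fin.sum_univ_five]
    unfold outC inC
    rw [Rel_b M b (Sum.inl 0), Rel_b M b (Sum.inl 1), Rel_b M b (Sum.inl 2),
      Rel_b M b (Sum.inl 3), Rel_b M b (Sum.inl 4), bRel_0, bRel_1, bRel_2, bRel_3, bRel_4]
    rw [show (tg M i : V M) = Sum.inr (some i) from rfl]
    rw [oLM_inr, iLM_inr, oLW_inr, iLW_inr]
    rw [show (Sum.inr (some i) : V M) = tg M i from rfl]
    rw [oTau_inr' , iTau_tg, oPhi_inr', iPhi_tg, oTh_tg, iTh_tg]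
    omega
  have hM : ∑ m : M,
      (outC M (Sum.inl (b, Sum.inr m)) (tg M i) + inC M (Sum.inl (b, Sum.inr m)) (tg M i))
      = 0 := by
    apply Finset.sum_eq_zero
    intro m _
    unfold outC inC
    rw [Rel_b, bRel_A]
    rw [show (tg M i : V M) = Sum.inr (some i) from rfl]
    rw [oA_inr, iA_inr]
    rfl
  rw [h5, hM]
  omega

theorem base_sum_om (b : Bool) :
    ∑ j : Fin 5 ⊕ M, (outC M (Sum.inl (b, j)) (om M) + inC M (Sum.inl (b, j)) (om M))
      = 4 + cZ M + NN M := by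
  rw [Fintype.sum_sum_type]
  have h5 : ∑ jf : Fin 5,
      (outC M (Sum.inl (b, Sum.inl jf)) (om M) + inC M (Sum.inl (b, Sum.inl jf)) (om M))
      = 4 + cZ M + NN M := by
    rw [Fin.sum_univ_five]
    unfold outC inC
    rw [Rel_b M b (Sum.inl 0), Rel_b M b (Sum.inl 1), Rel_b M b (Sum.inl 2),
      Rel_b M b (Sum.inl 3), Rel_b M b (Sum.inl 4), bRel_0, bRel_1, bRel_2, bRel_3, bRel_4]
    rw [show (om M : V M) = Sum.inr none from rfl]
    rw [oLM_inr, iLM_inr, oLW_inr, iLW_inr]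
    rw [show (Sum.inr none : V M) = om M from rfl]
    rw [oTau_inr'', iTau_om, oPhi_inr'', iPhi_om, oTh_om, iTh_om]
    omega
  have hM : ∑ m : M,
      (outC M (Sum.inl (b, Sum.inr m)) (om M) + inC M (Sum.inl (b, Sum.inr m)) (om M)) = 0 := by
    apply Finset.sum_eq_zero
    intro m _
    unfold outC inC
    rw [Rel_b, bRel_A]
    rw [show (om M : V M) = Sum.inr none from rfl]
    rw [oA_inr, iA_inr]
    rfl
  rw [h5, hM]
  omega

theorem deg_tg (i : Fin (ss M)) :
    ∑ j : Ix M, (outC M j (tg M i) + inC M j (tg M i)) = dd M := by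
  rw [Fintype.sum_sum_type, Fintype.sum_prod_type, Fintype.sum_sum_type]
  have hK : ∑ k : Fin (KK M),
      (outC M (Sum.inr (Sum.inl k)) (tg M i) + inC M (Sum.inr (Sum.inl k)) (tg M i))
      = rho M (i : ℕ) := by
    have hterm : ∀ k : Fin (KK M),
        outC M (Sum.inr (Sum.inl k)) (tg M i) + inC M (Sum.inr (Sum.inl k)) (tg M i)
        = (if 2 * ((k : ℕ) + 1) ≤ rho M (i : ℕ) then 1 else 0)
          + (if 2 * ((k : ℕ) + 1) ≤ rho M (i : ℕ) then 1 else 0) := by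
      intro k
      unfold outC inC
      rw [Rel_lam, oLam_tg, iLam_tg]
    rw [Finset.sum_congr rfl (fun k _ => hterm k), Finset.sum_add_distrib, sum_lam_tg]
    have hrho : rho M (i : ℕ) = 2 * (rho M (i : ℕ) / 2) := by
      unfold rho
      rw [Nat.mul_div_cancel_left _ (by norm_num : 0 < 2)]
    omega
  have hL : ∑ l : Fin (lam M),
      (outC M (Sum.inr (Sum.inr l)) (tg M i) + inC M (Sum.inr (Sum.inr l)) (tg M i)) = 0 := by
    apply Finset.sum_eq_zero
    intro l _
    unfold outC inC
    rw [Rel_om, oOm_ne M _ (tg_ne_om M i), iOm_ne M _ (tg_ne_om M i)]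
    rfl
  rw [hK, hL]
  rw [Finset.sum_congr rfl (fun b _ => base_sum_tg M i b)]
  simp only [Finset.sum_const, Finset.card_univ, Fintype.card_bool, smul_eq_mul]
  have h1 := rho_eq M (i : ℕ)
  have hrho : rho M (i : ℕ) = 2 * (rho M (i : ℕ) / 2) := by
    unfold rho
    rw [Nat.mul_div_cancel_left _ (by norm_num : 0 < 2)]
  have h2 : (i : ℕ) < ss M := i.2
  unfold dd
  omega

theorem deg_om : ∑ j : Ix M, (outC M j (om M) + inC M j (om M)) = dd M := by
  rw [Fintype.sum_sum_type, Fintype.sum_prod_type, Fintype.sum_sum_type]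
  have hK : ∑ k : Fin (KK M),
      (outC M (Sum.inr (Sum.inl k)) (om M) + inC M (Sum.inr (Sum.inl k)) (om M))
      = 2 * KK M := by
    rw [Finset.sum_congr rfl (fun k _ => by
      unfold outC inC
      rw [Rel_lam, oLam_om, iLam_om])]
    rw [Finset.sum_const, Finset.card_univ, Fintype.card_fin, smul_eq_mul]
    omega
  have hL : ∑ l : Fin (lam M),
      (outC M (Sum.inr (Sum.inr l)) (om M) + inC M (Sum.inr (Sum.inr l)) (om M)) = 2 * lam M := by
    rw [Finset.sum_congr rfl (fun l _ => by
      unfold outC inC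
      rw [Rel_om, oOm_om, iOm_om])]
    rw [Finset.sum_const, Finset.card_univ, Fintype.card_fin, smul_eq_mul]
    omega
  rw [hK, hL]
  rw [Finset.sum_congr rfl (fun b _ => base_sum_om M b)]
  simp only [Finset.sum_const, Finset.card_univ, Fintype.card_bool, smul_eq_mul]
  have h1 := cU_add_cZ M
  have h2 := NN_le_Rmax M
  have h3 := cZ_le_NN M
  have h4 := cU_le_NN M
  have h5 := NN_pos M
  unfold dd KK lam ss
  omega

theorem degV_const (v : V M) : ∑ j : Ix M, (outC M j v + inC M j v) = dd M := by
  rcases v with a | w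
  · exact deg_inl M a
  · rcases w with _ | i
    · exact deg_om M
    · exact deg_tg M i


-- strict monotone on Fin n is identity
theorem strictMono_fin_le {n : ℕ} {g : Fin n → Fin n} (hg : StrictMono g) :
    ∀ i : Fin n, (i : ℕ) ≤ (g i : ℕ) := by
  have H : ∀ m : ℕ, ∀ i : Fin n, (i : ℕ) = m → (i : ℕ) ≤ (g i : ℕ) := by
    intro m
    induction m using Nat.strong_induction_on with
    | _ m ih =>
      intro i him
      by_contra h
      push_neg at h
      have h1 : (g i : ℕ) ≤ (g (g i) : ℕ) := ih (g i : ℕ) (by omega) (g i) rfl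
      have h2 := hg (show g i < i from Fin.lt_def.mpr (by omega))
      rw [Fin.lt_def] at h2
      omega
  exact fun i => H (i : ℕ) i rfl

theorem strictMono_fin_id {n : ℕ} {g : Fin n → Fin n} (hg : StrictMono g) (i : Fin n) :
    g i = i := by
  have h1 := strictMono_fin_le hg i
  have hrev : StrictMono (fun j : Fin n => Fin.rev (g (Fin.rev j))) := by
    intro a b hab
    simp only []
    rw [Fin.rev_lt_rev]
    exact hg (Fin.rev_lt_rev.mpr hab)
  have h2 := strictMono_fin_le hrev (Fin.rev i)
  simp only [Fin.rev_rev] at h2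
  have h3 := Fin.val_rev (g i)
  have h4 := Fin.val_rev i
  have h5 := (g i).2
  have h6 := i.2
  exact Fin.ext (by omega)

-- the forcing theorem
theorem forcing (F : V M → V M)
    (hF : ∀ j x y, Rel M j x y → Rel M j (F x) (F y)) : ∃ c, F = act M c := by
  have pLM : ∀ x y, RelLM M x y → RelLM M (F x) (F y) :=
    fun x y h => hF (Sum.inl (true, Sum.inl 0)) x y h
  have pLW : ∀ x y, RelLW M x y → RelLW M (F x) (F y) :=
    fun x y h => hF (Sum.inl (true, Sum.inl 1)) x y h
  have pTau : ∀ x y, RelTau M x y → RelTau M (F x) (F y) :=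
    fun x y h => hF (Sum.inl (true, Sum.inl 2)) x y h
  have pTheta : ∀ x y, RelTheta M x y → RelTheta M (F x) (F y) :=
    fun x y h => hF (Sum.inl (true, Sum.inl 4)) x y h
  have pA : ∀ m x y, RelA M m x y → RelA M m (F x) (F y) :=
    fun m x y h => hF (Sum.inl (true, Sum.inr m)) x y h
  obtain ⟨c, hc, -⟩ := pLM (Sum.inl 1) (Sum.inl 1) ⟨1, rfl, rfl⟩
  have hM : ∀ m : M, F (Sum.inl m) = Sum.inl (c * m) := by
    intro m
    obtain ⟨a', h1, h2⟩ := pA m (Sum.inl 1) (Sum.inl m) ⟨1, rfl, by rw [one_mul]⟩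
    rw [hc] at h1
    rw [h2, Sum.inl_injective h1]
  have hOm : F (om M) = om M := by
    rcases pTheta (om M) (om M) (Or.inr ⟨rfl, rfl⟩) with ⟨i, j, hij, hi, hj⟩ | ⟨h1, -⟩
    · obtain rfl : i = j := tg_injective M (hi.symm.trans hj)
      omega
    · exact h1
  -- the last tag index
  have hss : 1 ≤ ss M := by have := Rmax_lt_ss M; omega
  set iL : Fin (ss M) := ⟨ss M - 1, by omega⟩ with hiL
  by_cases hcase : ∃ i0 : Fin (ss M), F (tg M i0) = om M
  · obtain ⟨i0, hi0⟩ := hcase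
    have hAll : ∀ i : Fin (ss M), F (tg M i) = om M := by
      intro i
      rcases lt_trichotomy ((i : ℕ)) ((i0 : ℕ)) with h | h | h
      · rcases pTheta (tg M i) (tg M i0) (Or.inl ⟨i, i0, h, rfl, rfl⟩) with
          ⟨i', j', _, _, h2⟩ | ⟨h1, -⟩
        · rw [hi0] at h2
          exact absurd h2 (om_ne_tg M j')
        · exact h1
      · rw [Fin.ext (h : (i : ℕ) = (i0 : ℕ))]
        exact hi0
      · rcases pTheta (tg M i0) (tg M i) (Or.inl ⟨i0, i, h, rfl, rfl⟩) with
          ⟨i', j', _, h1, _⟩ | ⟨-, h2⟩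
        · rw [hi0] at h1
          exact absurd h1 (om_ne_tg M i')
        · exact h2
    have hcu : ¬IsUnit c := by
      obtain ⟨b, hb, hbr⟩ := pTau (Sum.inl 1) (tg M iL)
        ⟨1, rfl, Or.inl ⟨isUnit_one, iL, rfl⟩⟩
      rw [hc] at hb
      obtain rfl : c = b := Sum.inl_injective hb
      rcases hbr with ⟨hu, i', hti⟩ | ⟨hnu, -⟩
      · rw [hAll iL] at hti
        exact absurd hti (om_ne_tg M i')
      · exact hnu
    refine ⟨c, funext fun v => ?_⟩
    rcases v with a | w
    · rw [hM a, act_inl]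
    · rcases w with _ | i
      · exact hOm
      · show F (tg M i) = act M c (tg M i)
        rw [hAll i, act_tg, if_neg hcu]
  · push_neg at hcase
    have hgex : ∀ i : Fin (ss M), ∃ j, F (tg M i) = tg M j := by
      intro i
      obtain ⟨w, hw, -⟩ := pLW (tg M i) (tg M i) ⟨some i, rfl, rfl⟩
      rcases w with _ | j
      · exact absurd hw (hcase i)
      · exact ⟨j, hw⟩
    choose g hg using hgex
    have hmono : StrictMono g := by
      intro i j hij
      rcases pTheta (tg M i) (tg M j) (Or.inl ⟨i, j, Fin.lt_def.mp hij, rfl, rfl⟩) with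
        ⟨i', j', hij', h1, h2⟩ | ⟨h1, -⟩
      · rw [hg i] at h1
        rw [hg j] at h2
        obtain rfl : g i = i' := tg_injective M h1
        obtain rfl : g j = j' := tg_injective M h2
        exact Fin.lt_def.mpr hij'
      · rw [hg i] at h1
        exact absurd h1 (tg_ne_om M (g i))
    have hid : ∀ i, F (tg M i) = tg M i := by
      intro i
      rw [hg i, strictMono_fin_id hmono i]
    have hcu : IsUnit c := by
      obtain ⟨b, hb, hbr⟩ := pTau (Sum.inl 1) (tg M iL)
        ⟨1, rfl, Or.inl ⟨isUnit_one, iL, rfl⟩⟩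
      rw [hc] at hb
      obtain rfl : c = b := Sum.inl_injective hb
      rcases hbr with ⟨hu, -⟩ | ⟨-, hr | ⟨i', hi', hti⟩⟩
      · exact hu
      · rw [hid iL] at hr
        exact absurd hr (tg_ne_om M iL)
      · rw [hid iL] at hti
        obtain rfl : iL = i' := tg_injective M hti
        simp only [hiL] at hi'
        omega
    refine ⟨c, funext fun v => ?_⟩
    rcases v with a | w
    · rw [hM a, act_inl]
    · rcases w with _ | i
      · exact hOm
      · show F (tg M i) = act M c (tg M i)
        rw [hid i, act_tg, if_pos hcu]


theorem final (M : Type) [Monoid M] [Fintype M] :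
    ∃ (n k : ℕ) (A : Fin k → Fin n → Fin n → Prop) (d : ℕ),
      (∀ v : Fin n,
        (∑ i : Fin k, ({w | A i v w}.ncard + {w | A i w v}.ncard)) = d) ∧
      ∃ e : M ≃ {F : Fin n → Fin n // ∀ i a b, A i a b → A i (F a) (F b)},
        (e 1).1 = id ∧ ∀ m m' : M, (e (m * m')).1 = (e m).1 ∘ (e m').1 := by
  classical
  have : Finite M := Finite.of_fintype M
  set n := Fintype.card (V M) with hn
  set k := Fintype.card (Ix M) with hk
  set eV : Fin n ≃ V M := (Fintype.equivFin (V M)).symm with heV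
  set eI : Fin k ≃ Ix M := (Fintype.equivFin (Ix M)).symm with heI
  set A : Fin k → Fin n → Fin n → Prop :=
    fun i x y => Rel M (eI i) (eV x) (eV y) with hA
  refine ⟨n, k, A, dd M, ?_, ?_⟩
  · intro v
    have hset : ∀ (i : Fin k),
        ({w | A i v w}.ncard = {w | Rel M (eI i) (eV v) w}.ncard ∧
         {w | A i w v}.ncard = {w | Rel M (eI i) w (eV v)}.ncard) := by
      intro i
      constructor
      · have h1 : {w | A i v w} = eV ⁻¹' {w | Rel M (eI i) (eV v) w} := rfl
        rw [h1, ← Equiv.image_symm_eq_preimage,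
          Set.ncard_image_of_injective _ eV.symm.injective]
      · have h1 : {w | A i w v} = eV ⁻¹' {w | Rel M (eI i) w (eV v)} := rfl
        rw [h1, ← Equiv.image_symm_eq_preimage,
          Set.ncard_image_of_injective _ eV.symm.injective]
    rw [Finset.sum_congr rfl (fun i _ => by rw [(hset i).1, (hset i).2])]
    rw [Equiv.sum_comp eI
      (fun j => {w | Rel M j (eV v) w}.ncard + {w | Rel M j w (eV v)}.ncard)]
    exact degV_const M (eV v)
  · -- the equivalence
    have pres : ∀ c : M, ∀ i a b, A i a b → A i (eV.symm (act M c (eV a))) (eV.symm (act M c (eV b))) := by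
      intro c i a b hab
      show Rel M (eI i) (eV (eV.symm (act M c (eV a)))) (eV (eV.symm (act M c (eV b))))
      rw [Equiv.apply_symm_apply, Equiv.apply_symm_apply]
      exact rel_act M c (eI i) (eV a) (eV b) hab
    set toF : M → {F : Fin n → Fin n // ∀ i a b, A i a b → A i (F a) (F b)} :=
      fun c => ⟨fun x => eV.symm (act M c (eV x)), pres c⟩ with htoF
    have conj_pres : ∀ F : {F : Fin n → Fin n // ∀ i a b, A i a b → A i (F a) (F b)},
        ∀ j x y, Rel M j x y → Rel M j (eV (F.1 (eV.symm x))) (eV (F.1 (eV.symm y))) := by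
      intro F j x y hxy
      have := F.2 (eI.symm j) (eV.symm x) (eV.symm y) (by
        show Rel M (eI (eI.symm j)) (eV (eV.symm x)) (eV (eV.symm y))
        rw [Equiv.apply_symm_apply, Equiv.apply_symm_apply, Equiv.apply_symm_apply]
        exact hxy)
      show Rel M j _ _
      have h2 : Rel M (eI (eI.symm j)) (eV (F.1 (eV.symm x))) (eV (F.1 (eV.symm y))) := this
      rwa [Equiv.apply_symm_apply] at h2
    have invex : ∀ F : {F : Fin n → Fin n // ∀ i a b, A i a b → A i (F a) (F b)},
        ∃ c, (fun v => eV (F.1 (eV.symm v))) = act M c :=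
      fun F => forcing M _ (conj_pres F)
    set invF : {F : Fin n → Fin n // ∀ i a b, A i a b → A i (F a) (F b)} → M :=
      fun F => Classical.choose (invex F) with hinvF
    have left_inv : Function.LeftInverse invF toF := by
      intro c
      have hspec := Classical.choose_spec (invex (toF c))
      have h1 : (fun v => eV ((toF c).1 (eV.symm v))) = act M c := by
        funext v
        show eV (eV.symm (act M c (eV (eV.symm v)))) = act M c v
        rw [Equiv.apply_symm_apply, Equiv.apply_symm_apply]
      have h3 : act M (Classical.choose (invex (toF c))) = act M c := hspec.symm.trans h1
      have h2 := congrFun h3 (Sum.inl 1)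
      rw [act_inl, act_inl, mul_one, mul_one] at h2
      exact Sum.inl_injective h2
    have right_inv : Function.RightInverse invF toF := by
      intro F
      have hspec := Classical.choose_spec (invex F)
      apply Subtype.ext
      funext x
      show eV.symm (act M (invF F) (eV x)) = F.1 x
      rw [← hspec]
      show eV.symm (eV (F.1 (eV.symm (eV x)))) = F.1 x
      rw [Equiv.symm_apply_apply, Equiv.symm_apply_apply]
    set e : M ≃ {F : Fin n → Fin n // ∀ i a b, A i a b → A i (F a) (F b)} :=
      ⟨toF, invF, left_inv, right_inv⟩ with he
    refine ⟨e, ?_, ?_⟩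
    · show (fun x => eV.symm (act M 1 (eV x))) = id
      funext x
      rw [act_one]
      show eV.symm (eV x) = x
      rw [Equiv.symm_apply_apply]
    · intro m m'
      show (fun x => eV.symm (act M (m * m') (eV x)))
        = (fun x => eV.symm (act M m (eV x))) ∘ (fun x => eV.symm (act M m' (eV x)))
      funext x
      rw [act_mul]
      show eV.symm (act M m (act M m' (eV x)))
        = eV.symm (act M m (eV (eV.symm (act M m' (eV x)))))
      rw [Equiv.apply_symm_apply]

end
end MERS

/-- Every finite monoid is isomorphic to the endomorphism monoid of a finite binary
relational system in which every vertex has the same total degree. -/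
theorem monoid_is_end_of_degree_regular_system (M : Type) [Monoid M] [Finite M] :
    ∃ (n k : ℕ) (A : Fin k → Fin n → Fin n → Prop) (d : ℕ),
      (∀ v : Fin n,
        (∑ i : Fin k, ({w | A i v w}.ncard + {w | A i w v}.ncard)) = d) ∧
      ∃ e : M ≃ {F : Fin n → Fin n // ∀ i a b, A i a b → A i (F a) (F b)},
        (e 1).1 = id ∧ ∀ m m' : M, (e (m * m')).1 = (e m).1 ∘ (e m').1 := by
  have := Fintype.ofFinite M
  exact MERS.final M
end

section
/- Let D be a digraph, S a graph indicator, and D * S the šíp product. Every odd cycle of D * S has length at least min{oddgirth(S), 2 + odddist(in S, out S)}, where odddist(in S, out S) is the minimum odd length of a path in S between in S and out S. -/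
/-- The šíp product `D * S`. -/
def sipProduct {U T : Type} (r : U → U → Prop) (S : SimpleGraph T) (vin vout : T) :
    SimpleGraph (U ⊕ ({a : U × U // r a.1 a.2} × T)) where
  Adj p q :=
    match p, q with
    | Sum.inl _, Sum.inl _ => False
    | Sum.inl x, Sum.inr (a, t) => (a.1.1 = x ∧ t = vin) ∨ (a.1.2 = x ∧ t = vout)
    | Sum.inr (a, t), Sum.inl x => (a.1.1 = x ∧ t = vin) ∨ (a.1.2 = x ∧ t = vout)
    | Sum.inr (a, t), Sum.inr (a', t') => a = a' ∧ S.Adj t t'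
  symm := ⟨by
    rintro (x | ⟨a, t⟩) (y | ⟨b, s⟩) h
    · exact h.elim
    · exact h
    · exact h
    · exact ⟨h.1.symm, h.2.symm⟩⟩
  loopless := ⟨by
    rintro (x | ⟨a, t⟩) h
    · exact h
    · exact S.irrefl h.2⟩

namespace SipAux

open SimpleGraph Walk

variable {U T : Type} {r : U → U → Prop} {S : SimpleGraph T} {vin vout : T}

/-- The embedding of a copy of `S` into the šíp product. -/
def homf (a : {p : U × U // r p.1 p.2}) : S →g sipProduct r S vin vout where
  toFun t := Sum.inr (a, t)
  map_rel' h := ⟨rfl, h⟩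

lemma homf_inj (a : {p : U × U // r p.1 p.2}) :
    Function.Injective (homf (S := S) (vin := vin) (vout := vout) a) := by
  intro s₁ s₂ h
  have h2 : (Sum.inr (a, s₁) : U ⊕ ({p : U × U // r p.1 p.2} × T)) = Sum.inr (a, s₂) := h
  simpa using h2

/-- A walk avoiding all `inl`-vertices stays in one copy of `S`. -/
lemma proj {v v' : U ⊕ ({p : U × U // r p.1 p.2} × T)}
    (p : (sipProduct r S vin vout).Walk v v') :
    (∀ x : U, Sum.inl x ∉ p.support) → ∀ {a t}, (hv : v = Sum.inr (a, t)) →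
    ∃ (s : T) (q : S.Walk t s) (h : v' = Sum.inr (a, s)),
      p.copy hv h = q.map (homf a) := by
  induction p with
  | nil =>
    intro _ a t hv
    subst hv
    exact ⟨t, Walk.nil, rfl, rfl⟩
  | @cons u u₂ w h' p' ih =>
    intro hsup a t hv
    subst hv
    rcases u₂ with x | ⟨a₂, t₂⟩
    · exact absurd (List.mem_cons_of_mem _ p'.start_mem_support) (hsup x)
    · obtain ⟨ha, hadj⟩ := h'
      subst ha
      obtain ⟨s, q', rfl, hq⟩ :=
        ih (fun x hx => hsup x (List.mem_cons_of_mem _ hx)) rfl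
      refine ⟨s, Walk.cons hadj q', rfl, ?_⟩
      rw [Walk.copy_rfl_rfl] at hq ⊢
      rw [Walk.map_cons]
      exact congrArg (Walk.cons _) hq
/-- Split off the first segment of a walk from inside a copy to an `inl` vertex. -/
lemma split {v v' : U ⊕ ({p : U × U // r p.1 p.2} × T)}
    (p : (sipProduct r S vin vout).Walk v v') :
    ∀ {a t} {y : U}, v = Sum.inr (a, t) → v' = Sum.inl y →
    ∃ (t' : T) (z : U) (q : S.Walk t t')
      (rest : (sipProduct r S vin vout).Walk (Sum.inl z) (Sum.inl y)),
      p.length = q.length + 1 + rest.length ∧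
      p.support = q.support.map (fun s => Sum.inr (a, s)) ++ rest.support ∧
      ((a.1.1 = z ∧ t' = vin) ∨ (a.1.2 = z ∧ t' = vout)) := by
  induction p with
  | nil => intro a t y hv hv'; subst hv'; exact absurd hv (by simp)
  | @cons u u₂ w h' p' ih =>
    intro a t y hv hv'
    subst hv; subst hv'
    rcases u₂ with z | ⟨a₂, t₂⟩
    · exact ⟨t, z, Walk.nil, p', by simp [Walk.length_cons]; omega,
        by simp [Walk.support_cons], h'⟩
    · obtain ⟨ha, hadj⟩ := h'
      subst ha
      obtain ⟨t', z, q, rest, hlen, hsupp, hz⟩ := ih rfl rfl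
      refine ⟨t', z, Walk.cons hadj q, rest, ?_, ?_, hz⟩
      · change p'.length + 1 = (Walk.cons hadj q).length + 1 + rest.length; simp only [Walk.length_cons] at hlen ⊢; omega
      · change Sum.inr (a, t) :: p'.support = _; simp [Walk.support_cons, hsupp]

/-- An odd path inside a copy joins `vin` and `vout`. -/
lemma segB (hio : vin ≠ vout) {t t' : T} (q : S.Walk t t') (hq : q.support.Nodup)
    (hodd : Odd q.length) (ht : t = vin ∨ t = vout) (ht' : t' = vin ∨ t' = vout) :
    Odd q.length ∧ ∃ p : S.Walk vin vout, p.IsPath ∧ p.length = q.length := by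
  have hp := Walk.IsPath.mk' hq
  have hne : t ≠ t' := by
    rintro rfl
    rw [Walk.isPath_iff_eq_nil] at hp
    subst hp
    simp [Nat.odd_iff] at hodd
  rcases ht with rfl | rfl <;> rcases ht' with rfl | rfl
  · exact absurd rfl hne
  · exact ⟨hodd, q, hp, rfl⟩
  · exact ⟨hodd, q.reverse, hp.reverse, by simp⟩
  · exact absurd rfl hne

/-- Key lemma: an odd walk between `inl` vertices with no repeats beyond the start
contains an odd `vin`–`vout` path. -/
lemma key (hio : vin ≠ vout) :
    ∀ (n : ℕ) {z y : U} (w : (sipProduct r S vin vout).Walk (Sum.inl z) (Sum.inl y)),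
    w.length ≤ n → w.support.tail.Nodup → Odd w.length →
    ∃ ℓ, (Odd ℓ ∧ ∃ p : S.Walk vin vout, p.IsPath ∧ p.length = ℓ) ∧ ℓ + 2 ≤ w.length := by
  intro n
  induction n with
  | zero =>
    intro z y w hn hnd hodd
    interval_cases h : w.length
    · simp [Nat.odd_iff] at hodd
  | succ n ih =>
    intro z y w hn hnd hodd
    cases w with
    | nil => simp [Nat.odd_iff] at hodd
    | @cons _ u₂ _ h' p₁ =>
      rcases u₂ with x | ⟨a, t⟩
      · exact h'.elim
      · have ht : t = vin ∨ t = vout := h'.imp And.right And.right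
        obtain ⟨t', z', q, rest, hlen, hsupp, hz⟩ := split p₁ rfl rfl
        have hnd₁ : p₁.support.Nodup := by
          simpa [Walk.support_cons] using hnd
        rw [hsupp] at hnd₁
        have hq : q.support.Nodup := (List.Nodup.of_append_left hnd₁).of_map
        have hrest : rest.support.Nodup := hnd₁.of_append_right
        have ht' : t' = vin ∨ t' = vout := hz.imp And.right And.right
        have hlen' : (Walk.cons h' p₁).length = q.length + rest.length + 2 := by
          simp only [Walk.length_cons]; omega
        rcases Nat.even_or_odd q.length with hev | hoddq
        · have hoddr : Odd rest.length := by
            rw [hlen'] at hodd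
            rcases hev with ⟨k, hk⟩
            rcases hodd with ⟨m, hm⟩
            exact ⟨m - k - 1, by omega⟩
          have hnlen : rest.length ≤ n := by
            have := hn; rw [hlen'] at this; omega
          obtain ⟨ℓ, hB, hle⟩ := ih rest hnlen
            (List.Nodup.sublist (List.tail_sublist _) hrest) hoddr
          exact ⟨ℓ, hB, by omega⟩
        · exact ⟨q.length, segB hio q hq hoddq ht ht', by omega⟩

lemma length_rotate {V : Type} {G : SimpleGraph V} [DecidableEq V] {v u : V} (c : G.Walk v v)
    (h : u ∈ c.support) : (c.rotate u h).length = c.length := by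
  have h2 := congrArg Walk.length (c.take_spec h)
  rw [Walk.length_append] at h2
  rw [Walk.rotate, Walk.length_append]
  omega

end SipAux

/-- Every odd cycle of the šíp product `D * S` has length at least
`min (oddgirth S) (2 + odddist(in S, out S))`, where `odddist` is the minimum odd
length of a path in `S` between `in S` and `out S`. -/
theorem sipProduct_odd_cycle_length {U T : Type} (r : U → U → Prop)
    (S : SimpleGraph T) (vin vout : T) (hio : vin ≠ vout) :
    ∀ (v) (w : (sipProduct r S vin vout).Walk v v), w.IsCycle → Odd w.length →
      min (sInf {n : ℕ | Odd n ∧ ∃ (t : T) (c : S.Walk t t), c.IsCycle ∧ c.length = n})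
          (2 + sInf {n : ℕ | Odd n ∧ ∃ p : S.Walk vin vout, p.IsPath ∧ p.length = n})
        ≤ w.length := by
  intro v w hc hodd
  classical
  rcases Classical.em (∃ x : U, Sum.inl x ∈ w.support) with hx | hx
  · obtain ⟨x, hmem⟩ := hx
    have hc' := hc.rotate hmem
    have hlr : (w.rotate _ hmem).length = w.length := SipAux.length_rotate w hmem
    obtain ⟨ℓ, hB, hle⟩ := SipAux.key hio (w.rotate _ hmem).length (w.rotate _ hmem) le_rfl
      hc'.support_nodup (by rw [hlr]; exact hodd)
    refine le_trans (min_le_right _ _) ?_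
    have h1 : sInf {n : ℕ | Odd n ∧ ∃ p : S.Walk vin vout, p.IsPath ∧ p.length = n} ≤ ℓ :=
      Nat.sInf_le hB
    omega
  · push_neg at hx
    rcases v with x | ⟨a, t⟩
    · exact absurd w.start_mem_support (hx x)
    · obtain ⟨s, q, hv, heq⟩ := SipAux.proj w (fun x => hx x) rfl
      have hts : t = s := by simpa using hv
      subst hts
      rw [show hv = rfl from rfl, SimpleGraph.Walk.copy_rfl_rfl] at heq
      have hqc : q.IsCycle :=
        (SimpleGraph.Walk.map_isCycle_iff_of_injective (SipAux.homf_inj a)).mp (heq ▸ hc)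
      have hql : q.length = w.length := by
        rw [heq]; exact (SimpleGraph.Walk.length_map ..).symm
      refine le_trans (min_le_left _ _) ?_
      refine le_trans (Nat.sInf_le ⟨by rw [hql]; exact hodd, t, q, hqc, rfl⟩) (le_of_eq hql)
end
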